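/- Component relevancy of the multistate series structure function: for natural numbers l and j with l ≠ j, a nonempty list L of natural numbers, and an index i < length L, if every element of L is strictly greater than j and the minimum of the list obtained from L by replacing its i-th element with j equals j, then the minimum of the list obtained from L by replacing its i-th element with l is not equal to j. -/

import Mathlib

/-- Multistate series structure function: the minimum of the component states. -/
def seriesMS : List ℕ → ℕ
  | [] => 0
  | [x] => x
  | x :: y :: ys => min x (seriesMS (y :: ys))

lemma seriesMS_mem : ∀ L : List ℕ, L ≠ [] → seriesMS L ∈ L
  | [x], _ => by simp [seriesMS]
  | x :: y :: ys, _ => by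
    have ih := seriesMS_mem (y :: ys) (by simp)
    simp only [seriesMS]
    rcases min_cases x (seriesMS (y :: ys)) with ⟨h, _⟩ | ⟨h, _⟩ <;> rw [h]
    · exact List.mem_cons_self
    · exact List.mem_cons_of_mem _ ih

/-- Component relevancy of the multistate series structure function. -/
theorem seriesMS_relevancy (l j : ℕ) (L : List ℕ) (i : ℕ)
    (h1 : l ≠ j) (h2 : i < L.length) (h3 : L ≠ [])
    (h4 : ∀ x ∈ L, x > j) (h5 : seriesMS (L.set i j) = j) :
    seriesMS (L.set i l) ≠ j := by
  intro hc
  have hm := seriesMS_mem (L.set i l) (by simp [h3])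
  rw [hc] at hm
  rcases List.mem_or_eq_of_mem_set hm with h | h
  · exact absurd (h4 _ h) (lt_irrefl j)
  · exact h1 h.symm
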